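/- A string w of length n has at most n − 1 distinct right-maximal repeats. -/
import Mathlib


open Set List

variable {A : Type*}

/-- `β` occurs in `w` at (0-indexed) position `i`, i.e. `w[i..i+|β|-1] = β`. -/
def OccursAt (w β : List A) (i : ℕ) : Prop := β <+: w.drop i

/-- A repeat of `w`: a nonempty string occurring in `w` at two distinct positions. -/
def IsRepeat (w β : List A) : Prop :=
  β ≠ [] ∧ ∃ i j, i ≠ j ∧ OccursAt w β i ∧ OccursAt w β j

/-- A right-maximal repeat of `w`: a repeat with two occurrences whose right-adjacent
characters differ.  The right-adjacent character of the occurrence at `i` is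
`w[i+|β|]?  : Option A`; the value `none` (an occurrence at the right end of `w`)
plays the role of the special character distinct from all alphabet characters. -/
def IsRMRepeat (w β : List A) : Prop :=
  β ≠ [] ∧ ∃ i j, i ≠ j ∧ OccursAt w β i ∧ OccursAt w β j ∧
    w[i + β.length]? ≠ w[j + β.length]?

/-- `RightExtClosure w β α` says that `α = r(β)`, the right-maximal repeat obtained
from `β` by repeatedly appending the unique common right-adjacent character of all
of its occurrences: equivalently, `α` is a right-maximal repeat of `w` extending `β`
such that no intermediate extension `γ` (with `β ≤ γ < α`) is already right-maximal. -/
def RightExtClosure (w β α : List A) : Prop :=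
  IsRMRepeat w α ∧ β <+: α ∧
    ∀ γ, β <+: γ → γ <+: α → γ ≠ α → ¬ IsRMRepeat w γ

/-- The set of occurrence positions of `α` in `w`. -/
def occSet (w α : List A) : Set ℕ := {i | OccursAt w α i}

/-- Occurrences of `α` whose right-adjacent character differs from that of the
leftmost occurrence. -/
def brSet (w α : List A) : Set ℕ :=
  {i | OccursAt w α i ∧ w[i + α.length]? ≠ w[sInf (occSet w α) + α.length]?}

/-- The injection: the leftmost occurrence of `α` whose right-adjacent character differs
from that of the leftmost occurrence. -/
noncomputable def fpos (w α : List A) : ℕ := sInf (brSet w α)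

lemma occ_lt {w β : List A} {i : ℕ} (hβ : β ≠ []) (h : OccursAt w β i) : i < w.length := by
  by_contra hi
  push_neg at hi
  rw [OccursAt, List.drop_eq_nil_of_le hi] at h
  exact hβ (List.prefix_nil.mp h)

lemma occ_getElem? {w β : List A} {i k : ℕ} (h : OccursAt w β i) (hk : k < β.length) :
    w[i + k]? = β[k]? := by
  obtain ⟨t, ht⟩ := h
  rw [← List.getElem?_drop, ← ht, List.getElem?_append_left hk]

lemma brSet_nonempty {w α : List A} (hα : IsRMRepeat w α) : (brSet w α).Nonempty := by
  obtain ⟨hne, i, j, hij, hi, hj, hchar⟩ := hα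
  by_cases h : w[i + α.length]? = w[sInf (occSet w α) + α.length]?
  · exact ⟨j, hj, fun hj' => hchar (h.trans hj'.symm)⟩
  · exact ⟨i, hi, h⟩

lemma fpos_mem {w α : List A} (hα : IsRMRepeat w α) : fpos w α ∈ brSet w α :=
  Nat.sInf_mem (brSet_nonempty hα)

lemma fpos_occ {w α : List A} (hα : IsRMRepeat w α) : OccursAt w α (fpos w α) :=
  (fpos_mem hα).1

lemma fpos_pos {w α : List A} (hα : IsRMRepeat w α) : 1 ≤ fpos w α := by
  have hmem := fpos_mem hα
  have h1 : sInf (occSet w α) ≤ fpos w α := Nat.sInf_le hmem.1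
  have h2 : fpos w α ≠ sInf (occSet w α) := by
    intro h
    exact hmem.2 (by rw [h])
  omega

lemma fpos_lt {w α : List A} (hα : IsRMRepeat w α) : fpos w α < w.length :=
  occ_lt hα.1 (fpos_occ hα)

/-- Key asymmetric step of injectivity: if `α` is a proper prefix of `β`, they cannot
share the same `fpos`. -/
lemma fpos_key {w α β : List A} (hα : IsRMRepeat w α) (hβ : IsRMRepeat w β)
    (hpre : α <+: β) (hne : α ≠ β) (hf : fpos w α = fpos w β) : False := by
  have hlen : α.length < β.length :=
    lt_of_le_of_ne hpre.length_le (fun h => hne (List.IsPrefix.eq_of_length hpre h))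
  set j := fpos w α with hj
  have hjα : j ∈ brSet w α := fpos_mem hα
  have hjβ : j ∈ brSet w β := hf ▸ fpos_mem hβ
  -- mβ : the leftmost occurrence of β
  set mβ := sInf (occSet w β) with hmβ
  have hSβne : (occSet w β).Nonempty := by
    obtain ⟨_, i, _, _, hi, _, _⟩ := hβ
    exact ⟨i, hi⟩
  have hmβocc : OccursAt w β mβ := Nat.sInf_mem hSβne
  -- both j and mβ are occurrences of β, so their chars at offset α.length agree
  have hchar_eq : w[j + α.length]? = w[mβ + α.length]? := by
    rw [occ_getElem? hjβ.1 hlen, occ_getElem? hmβocc hlen]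
  -- mβ is an occurrence of α with a char differing from the leftmost occ of α
  have hmβ_br : mβ ∈ brSet w α := by
    refine ⟨hpre.trans hmβocc, ?_⟩
    rw [← hchar_eq]
    exact hjα.2
  -- hence j ≤ mβ; but mβ ≤ j since j occurs β; so j = mβ
  have h1 : j ≤ mβ := Nat.sInf_le hmβ_br
  have h2 : mβ ≤ j := Nat.sInf_le hjβ.1
  have : j = mβ := le_antisymm h1 h2
  exact hjβ.2 (by rw [this])

/-- a string of length `n ≥ 1` has at most `n − 1` distinct right-maximal
repeats. -/
theorem card_rm_repeats_le (w : List A) (hw : 1 ≤ w.length) :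
    {α : List A | IsRMRepeat w α}.ncard ≤ w.length - 1 := by
  have key : {α : List A | IsRMRepeat w α}.ncard ≤ (Set.Icc 1 (w.length - 1)).ncard := by
    apply Set.ncard_le_ncard_of_injOn (fpos w)
    · intro α hα
      have h1 := fpos_pos hα
      have h2 := fpos_lt hα
      exact ⟨h1, by omega⟩
    · intro α hα β hβ hf
      by_contra hne
      rcases List.prefix_or_prefix_of_prefix (fpos_occ hα) ((hf ▸ fpos_mem hβ).1 :
          β <+: w.drop (fpos w α)) with hp | hp
      · exact fpos_key hα hβ hp hne hf
      · exact fpos_key hβ hα hp (Ne.symm hne) hf.symm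
  calc {α : List A | IsRMRepeat w α}.ncard ≤ (Set.Icc 1 (w.length - 1)).ncard := key
    _ = w.length - 1 := by
        rw [← Finset.coe_Icc, Set.ncard_coe_finset, Nat.card_Icc]
        omega
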